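/- In the L×L toric grid (L ≥ 4 even), any closed curve in the dual torus that is non-contractible has length at least 2L; hence since each contour curve has an equal number of horizontal and vertical edges, each non-contractible contour curve has length at least 2L, and a stripe region, whose contour contains two disjoint non-contractible closed curves, has contour length |c_R| ≥ 4L. -/

import Mathlib

open scoped Classical

/-- A list of unit steps in the square lattice (a curve in the dual torus of
the `L×L` toric grid, encoded by its steps). -/
def UnitSteps (steps : List (ℤ × ℤ)) : Prop :=
  ∀ d ∈ steps, d = (1, 0) ∨ d = (-1, 0) ∨ d = (0, 1) ∨ d = (0, -1)

/-- The curve is closed in the torus with winding numbers `(w1, w2)`: the total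
displacement is `(w1·L, w2·L)`. -/
def Winding (L : ℕ) (steps : List (ℤ × ℤ)) (w1 w2 : ℤ) : Prop :=
  (steps.map Prod.fst).sum = w1 * L ∧ (steps.map Prod.snd).sum = w2 * L

/-- The curve has an equal number of horizontal and vertical edges (as every
contour curve does). -/
def BalancedSteps (steps : List (ℤ × ℤ)) : Prop :=
  (steps.filter (fun d => d.2 = 0)).length =
    (steps.filter (fun d => d.1 = 0)).length

/-- In the dual of the `L×L` torus (`L ≥ 4` even), a
non-contractible closed curve (nonzero winding number in some direction) has
at least `L` edges in that direction; hence, since contour curves have an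
equal number of horizontal and vertical edges, each non-contractible contour
curve has length at least `2L`; and a stripe region, whose contour contains
two disjoint non-contractible closed curves, has contour length `≥ 4L`. -/
lemma steps_key (steps : List (ℤ × ℤ)) (h : UnitSteps steps) :
    (steps.map Prod.fst).sum.natAbs ≤ (steps.filter (fun d => d.2 = 0)).length ∧
    (steps.map Prod.snd).sum.natAbs ≤ (steps.filter (fun d => d.1 = 0)).length ∧
    (steps.filter (fun d => d.2 = 0)).length + (steps.filter (fun d => d.1 = 0)).length
      ≤ steps.length := by
  induction steps with
  | nil => simp
  | cons d l ih =>
    have hd := h d (List.mem_cons_self)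
    have hl : UnitSteps l := fun x hx => h x (List.mem_cons_of_mem d hx)
    obtain ⟨ih1, ih2, ih3⟩ := ih hl
    have habs1 : ((d :: l).map Prod.fst).sum.natAbs ≤ d.1.natAbs + (l.map Prod.fst).sum.natAbs := by
      simp only [List.map_cons, List.sum_cons]
      exact Int.natAbs_add_le _ _
    have habs2 : ((d :: l).map Prod.snd).sum.natAbs ≤ d.2.natAbs + (l.map Prod.snd).sum.natAbs := by
      simp only [List.map_cons, List.sum_cons]
      exact Int.natAbs_add_le _ _
    rcases hd with h1 | h1 | h1 | h1 <;> subst h1 <;>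
      simp only [List.filter_cons, List.length_cons] at * <;> norm_num at * <;> omega

theorem stmt_11 (L : ℕ) (hL : 4 ≤ L) (hLeven : Even L) :
    (∀ (steps : List (ℤ × ℤ)) (w1 w2 : ℤ),
      UnitSteps steps → Winding L steps w1 w2 → (w1 ≠ 0 ∨ w2 ≠ 0) →
      ((w1 ≠ 0 → L ≤ (steps.filter (fun d => d.2 = 0)).length) ∧
       (w2 ≠ 0 → L ≤ (steps.filter (fun d => d.1 = 0)).length)) ∧
      (BalancedSteps steps → 2 * L ≤ steps.length)) ∧
    (∀ (s₁ s₂ : List (ℤ × ℤ)) (w1 w2 w1' w2' : ℤ) (cR : ℕ),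
      UnitSteps s₁ → Winding L s₁ w1 w2 → (w1 ≠ 0 ∨ w2 ≠ 0) → BalancedSteps s₁ →
      UnitSteps s₂ → Winding L s₂ w1' w2' → (w1' ≠ 0 ∨ w2' ≠ 0) → BalancedSteps s₂ →
      -- the contour of the stripe contains both disjoint curves
      s₁.length + s₂.length ≤ cR →
      4 * L ≤ cR) := by
  have main : ∀ (steps : List (ℤ × ℤ)) (w1 w2 : ℤ),
      UnitSteps steps → Winding L steps w1 w2 → (w1 ≠ 0 ∨ w2 ≠ 0) →
      ((w1 ≠ 0 → L ≤ (steps.filter (fun d => d.2 = 0)).length) ∧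
       (w2 ≠ 0 → L ≤ (steps.filter (fun d => d.1 = 0)).length)) ∧
      (BalancedSteps steps → 2 * L ≤ steps.length) := by
    intro steps w1 w2 hu hw hnz
    obtain ⟨k1, k2, k3⟩ := steps_key steps hu
    obtain ⟨hw1, hw2⟩ := hw
    rw [hw1] at k1; rw [hw2] at k2
    have e1 : (w1 * (L : ℤ)).natAbs = w1.natAbs * L := by
      rw [Int.natAbs_mul, Int.natAbs_natCast]
    have e2 : (w2 * (L : ℤ)).natAbs = w2.natAbs * L := by
      rw [Int.natAbs_mul, Int.natAbs_natCast]
    rw [e1] at k1; rw [e2] at k2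
    have h1 : w1 ≠ 0 → L ≤ (steps.filter (fun d => d.2 = 0)).length := by
      intro h
      have : 1 ≤ w1.natAbs := by
        have := Int.natAbs_pos.mpr h; omega
      nlinarith
    have h2 : w2 ≠ 0 → L ≤ (steps.filter (fun d => d.1 = 0)).length := by
      intro h
      have : 1 ≤ w2.natAbs := by
        have := Int.natAbs_pos.mpr h; omega
      nlinarith
    refine ⟨⟨h1, h2⟩, fun hb => ?_⟩
    unfold BalancedSteps at hb
    rcases hnz with h | h
    · have := h1 h; omega
    · have := h2 h; omega
  refine ⟨main, ?_⟩
  intro s₁ s₂ w1 w2 w1' w2' cR hu1 hw1 hnz1 hb1 hu2 hw2 hnz2 hb2 hle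
  have m1 := (main s₁ w1 w2 hu1 hw1 hnz1).2 hb1
  have m2 := (main s₂ w1' w2' hu2 hw2 hnz2).2 hb2
  omega
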